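/- arXiv:1812.02936 — 5 statements merged into one kernel-verified Lean document; each statement's English description precedes it below -/
import Mathlib

section
/- For every natural number ρ and L ≥ 1, the number of binary words x of length L with fewer than L/2 − ρ runs is at most 2^L / e^(2ρ²/L). -/
/-- The number of runs of a binary word `x` of length `L`:
`‖x‖ = |{j : x_j ≠ x_{j+1}}| + 1`. -/
def runCount (L : ℕ) (x : Fin L → Bool) : ℕ :=
  (Finset.univ.filter (fun j : Fin (L - 1) =>
      x ⟨j.1, by have := j.isLt; omega⟩ ≠ x ⟨j.1 + 1, by have := j.isLt; omega⟩)).card + 1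

section
open Finset Real

lemma sum_exp_neg_wt (n : ℕ) (c : ℝ) :
    ∑ d : Fin n → Bool,
        Real.exp (-(c * ((univ.filter (fun i => d i = true)).card : ℝ)))
      = (1 + Real.exp (-c)) ^ n := by
  have h : ∀ d : Fin n → Bool,
      Real.exp (-(c * ((univ.filter (fun i => d i = true)).card : ℝ)))
        = ∏ i : Fin n, (fun b : Bool => if b then Real.exp (-c) else 1) (d i) := by
    intro d
    rw [Finset.card_filter]
    push_cast
    rw [Finset.mul_sum, ← Finset.sum_neg_distrib, Real.exp_sum]
    refine Finset.prod_congr rfl fun i _ => ?_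
    by_cases hi : d i <;> simp [hi]
  simp_rw [h]
  have hb : (1 + Real.exp (-c)) = ∑ b : Bool, (if b = true then Real.exp (-c) else 1) := by
    simp [add_comm]
  rw [hb, Fintype.sum_pow]

lemma chernoff (n : ℕ) (t : ℝ) (ht : 0 < t) (hn : 0 < n) :
    ((univ.filter (fun d : Fin n → Bool =>
        ((univ.filter (fun i => d i = true)).card : ℝ) ≤ n / 2 - t)).card : ℝ)
      ≤ 2 ^ n * Real.exp (-(2 * t ^ 2 / n)) := by
  set l : ℝ := 4 * t / n with hl
  have hnpos : (0:ℝ) < n := by exact_mod_cast hn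
  have hlpos : 0 < l := by positivity
  have key : ((univ.filter (fun d : Fin n → Bool =>
        ((univ.filter (fun i => d i = true)).card : ℝ) ≤ n / 2 - t)).card : ℝ)
      ≤ Real.exp (l * (n / 2 - t)) * (1 + Real.exp (-l)) ^ n := by
    rw [← sum_exp_neg_wt n l, Finset.mul_sum]
    calc ((univ.filter (fun d : Fin n → Bool =>
            ((univ.filter (fun i => d i = true)).card : ℝ) ≤ n / 2 - t)).card : ℝ)
        = ∑ d ∈ univ.filter (fun d : Fin n → Bool =>
            ((univ.filter (fun i => d i = true)).card : ℝ) ≤ n / 2 - t), (1:ℝ) := by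
          simp
      _ ≤ ∑ d ∈ univ.filter (fun d : Fin n → Bool =>
            ((univ.filter (fun i => d i = true)).card : ℝ) ≤ n / 2 - t),
            Real.exp (l * (n / 2 - t)) *
              Real.exp (-(l * ((univ.filter (fun i => d i = true)).card : ℝ))) := by
          refine Finset.sum_le_sum fun d hd => ?_
          rw [Finset.mem_filter] at hd
          rw [← Real.exp_add]
          refine Real.one_le_exp ?_
          have := hd.2
          nlinarith
      _ ≤ ∑ d : Fin n → Bool, Real.exp (l * (n / 2 - t)) *
              Real.exp (-(l * ((univ.filter (fun i => d i = true)).card : ℝ))) := by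
          refine Finset.sum_le_sum_of_subset_of_nonneg (Finset.filter_subset _ _)
            fun d _ _ => by positivity
  have e1 : Real.exp (-(l/2)) * Real.exp (l/2) = 1 := by
    rw [← Real.exp_add]; simp
  have e2 : Real.exp (-(l/2)) * Real.exp (-(l/2)) = Real.exp (-l) := by
    rw [← Real.exp_add]; ring_nf
  have hcosh : 1 + Real.exp (-l) = 2 * Real.exp (-(l/2)) * Real.cosh (l/2) := by
    rw [Real.cosh_eq]
    linear_combination -e1 - e2
  have h2 : (1 + Real.exp (-l)) ^ n
      ≤ (2 * Real.exp (-(l/2)) * Real.exp ((l/2)^2/2)) ^ n := by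
    rw [hcosh]
    exact pow_le_pow_left₀ (by positivity)
      (mul_le_mul_of_nonneg_left (Real.cosh_le_exp_half_sq _) (by positivity)) n
  have h3 : Real.exp (l * (n / 2 - t)) * (2 * Real.exp (-(l/2)) * Real.exp ((l/2)^2/2)) ^ n
      = 2 ^ n * Real.exp (-(2 * t ^ 2 / n)) := by
    rw [mul_pow, mul_pow, ← Real.exp_nat_mul, ← Real.exp_nat_mul]
    calc Real.exp (l * (n / 2 - t)) * (2 ^ n * Real.exp (n * -(l/2)) * Real.exp (n * ((l/2)^2/2)))
        = 2 ^ n * Real.exp (l * (n / 2 - t) + n * -(l/2) + n * ((l/2)^2/2)) := by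
          rw [Real.exp_add, Real.exp_add]; ring
      _ = 2 ^ n * Real.exp (-(2 * t ^ 2 / n)) := by
          congr 1
          rw [hl]
          field_simp
          ring
  calc ((univ.filter (fun d : Fin n → Bool =>
        ((univ.filter (fun i => d i = true)).card : ℝ) ≤ n / 2 - t)).card : ℝ)
      ≤ Real.exp (l * (n / 2 - t)) * (1 + Real.exp (-l)) ^ n := key
    _ ≤ Real.exp (l * (n / 2 - t)) * (2 * Real.exp (-(l/2)) * Real.exp ((l/2)^2/2)) ^ n :=
        mul_le_mul_of_nonneg_left h2 (Real.exp_pos _).le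
    _ = 2 ^ n * Real.exp (-(2 * t ^ 2 / n)) := h3


lemma inj_step (L : ℕ) (hL : 1 ≤ L) (x y : Fin L → Bool)
    (h0 : x ⟨0, hL⟩ = y ⟨0, hL⟩)
    (hd : ∀ j : Fin (L-1),
      decide (x ⟨j.1, by have := j.isLt; omega⟩ ≠ x ⟨j.1 + 1, by have := j.isLt; omega⟩)
      = decide (y ⟨j.1, by have := j.isLt; omega⟩ ≠ y ⟨j.1 + 1, by have := j.isLt; omega⟩)) :
    x = y := by
  funext i
  obtain ⟨k, hk⟩ := i
  induction k with
  | zero => exact h0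
  | succ k ih =>
    have hk' : k < L := by omega
    have h1 := ih hk'
    have hkl : k < L - 1 := by omega
    have hd' := hd ⟨k, hkl⟩
    simp only [decide_eq_decide] at hd'
    have hx : x ⟨k, by omega⟩ = y ⟨k, by omega⟩ := h1
    by_cases hh : x ⟨k + 1, by omega⟩ = y ⟨k + 1, by omega⟩
    · exact hh
    · exfalso
      revert hd' hx hh
      cases x ⟨k, by omega⟩ <;> cases y ⟨k, by omega⟩ <;>
        cases x ⟨k+1, by omega⟩ <;> cases y ⟨k+1, by omega⟩ <;> simp

open Classical in
theorem count_words_few_runs (L ρ : ℕ) (hL : 1 ≤ L) :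
    ((Finset.univ.filter
        (fun x : Fin L → Bool => (runCount L x : ℝ) < (L : ℝ) / 2 - ρ)).card : ℝ)
      ≤ (2 : ℝ) ^ L / Real.exp (2 * (ρ : ℝ) ^ 2 / L) := by
  rw [show (2:ℝ) ^ L / Real.exp (2 * (ρ:ℝ) ^ 2 / L)
      = 2 ^ L * Real.exp (-(2 * (ρ:ℝ) ^ 2 / L)) from by
    rw [Real.exp_neg]; ring]
  rcases eq_or_lt_of_le hL with h1 | h2
  · -- L = 1 : the set is empty
    have hempty : (Finset.univ.filter
        (fun x : Fin L → Bool => (runCount L x : ℝ) < (L : ℝ) / 2 - ρ)).card = 0 := by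
      rw [Finset.card_eq_zero, Finset.filter_eq_empty_iff]
      intro x _
      have h1' : (L : ℝ) = 1 := by rw [← h1]; norm_num
      have hr : (1 : ℝ) ≤ (runCount L x : ℝ) := by
        have : 1 ≤ runCount L x := Nat.le_add_left 1 _
        exact_mod_cast this
      have hρ : (0:ℝ) ≤ (ρ : ℝ) := Nat.cast_nonneg _
      rw [h1']
      push_neg
      linarith
    rw [hempty]
    push_cast
    positivity
  · -- L ≥ 2
    set n := L - 1 with hn
    have hnL : n + 1 = L := by omega
    have hnpos : 0 < n := by omega
    set t : ℝ := (ρ : ℝ) + 1/2 with hts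
    have ht : 0 < t := by positivity
    set D : (Fin L → Bool) → (Fin n → Bool) := fun x j =>
      decide (x ⟨j.1, by have := j.isLt; omega⟩ ≠ x ⟨j.1 + 1, by have := j.isLt; omega⟩)
      with hD
    have hwt : ∀ x : Fin L → Bool,
        (univ.filter (fun i => D x i = true)).card + 1 = runCount L x := by
      intro x
      unfold runCount
      congr 1
      apply Finset.card_bij (fun a _ => a) <;> simp [hD]
    have hcard : ((Finset.univ.filter
        (fun x : Fin L → Bool => (runCount L x : ℝ) < (L : ℝ) / 2 - ρ)).card : ℕ)
        ≤ ((Finset.univ : Finset Bool) ×ˢ (univ.filter (fun d : Fin n → Bool =>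
        ((univ.filter (fun i => d i = true)).card : ℝ) ≤ (n : ℝ) / 2 - t))).card := by
      apply Finset.card_le_card_of_injOn (fun x => (x ⟨0, hL⟩, D x))
      · intro x hx
        rw [Finset.mem_coe, Finset.mem_filter] at hx
        rw [Finset.mem_coe, Finset.mem_product, Finset.mem_filter]
        refine ⟨Finset.mem_univ _, Finset.mem_univ _, ?_⟩
        have hx2 := hx.2
        rw [← hwt x] at hx2
        push_cast at hx2
        have hLc : (n : ℝ) = (L : ℝ) - 1 := by
          have : ((n : ℕ) : ℝ) + 1 = L := by exact_mod_cast congrArg (Nat.cast : ℕ → ℝ) hnL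
          linarith
        rw [hLc, hts]
        linarith
      · intro x _ y _ hxy
        have h0 : x ⟨0, hL⟩ = y ⟨0, hL⟩ := congrArg Prod.fst hxy
        have hdeq : D x = D y := congrArg Prod.snd hxy
        exact inj_step L hL x y h0 (fun j => congrFun hdeq j)
    have hprod : ((Finset.univ : Finset Bool) ×ˢ (univ.filter (fun d : Fin n → Bool =>
        ((univ.filter (fun i => d i = true)).card : ℝ) ≤ (n : ℝ) / 2 - t))).card
        = 2 * (univ.filter (fun d : Fin n → Bool =>
        ((univ.filter (fun i => d i = true)).card : ℝ) ≤ (n : ℝ) / 2 - t)).card := by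
      rw [Finset.card_product]
      simp
    have hmain : ((univ.filter (fun d : Fin n → Bool =>
        ((univ.filter (fun i => d i = true)).card : ℝ) ≤ (n : ℝ) / 2 - t)).card : ℝ) ≤ 2 ^ n * Real.exp (-(2 * t ^ 2 / n)) := by
      exact chernoff n t ht hnpos
    have hLc : (n : ℝ) = (L : ℝ) - 1 := by
      have : ((n : ℕ) : ℝ) + 1 = L := by exact_mod_cast congrArg (Nat.cast : ℕ → ℝ) hnL
      linarith
    have hL2 : (2:ℝ) ≤ (L:ℝ) := by exact_mod_cast h2
    have hexp : Real.exp (-(2 * t ^ 2 / n)) ≤ Real.exp (-(2 * (ρ:ℝ) ^ 2 / L)) := by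
      rw [Real.exp_le_exp, neg_le_neg_iff]
      rw [hLc, hts]
      apply div_le_div₀ (by positivity) (by nlinarith) (by linarith) (by linarith)
    calc ((Finset.univ.filter
        (fun x : Fin L → Bool => (runCount L x : ℝ) < (L : ℝ) / 2 - ρ)).card : ℝ)
        ≤ ((2 * (univ.filter (fun d : Fin n → Bool =>
        ((univ.filter (fun i => d i = true)).card : ℝ) ≤ (n : ℝ) / 2 - t)).card : ℕ) : ℝ) := by
          rw [← hprod]; exact_mod_cast hcard
      _ = 2 * ((univ.filter (fun d : Fin n → Bool =>
        ((univ.filter (fun i => d i = true)).card : ℝ) ≤ (n : ℝ) / 2 - t)).card : ℝ) := by push_cast; ring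
      _ ≤ 2 * (2 ^ n * Real.exp (-(2 * t ^ 2 / n))) := by linarith
      _ = 2 ^ L * Real.exp (-(2 * t ^ 2 / n)) := by
          rw [← hnL, pow_succ]; ring
      _ ≤ 2 ^ L * Real.exp (-(2 * (ρ:ℝ) ^ 2 / L)) := by
          have : (0:ℝ) ≤ 2 ^ L := by positivity
          nlinarith [Real.exp_pos (-(2 * t ^ 2 / (n:ℝ)))]
      _ = (2:ℝ) ^ L * Real.exp (-(2 * (ρ:ℝ) ^ 2 / L)) := rfl

end
end

section
/- For any M-element set S of binary sequences of length L with M ≥ s + t and 2^L ≥ M, the error ball B_{s,t,•}(S) of the (s,t,•) channel contains at least C(M, s+t)·C(2^L − M, t) distinct received sets, each consisting of exactly M − s sequences of length L. -/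
open Classical in
/-- The error ball `B_{s,t,•}(S)` of the `(s,t,•)` channel: all received sets
obtained from `S` by losing up to `s` sequences and arbitrarily corrupting up to
`t` of the remaining sequences (duplicates merged). -/
noncomputable def ballBullet (L s t : ℕ) (S : Finset (Fin L → Bool)) :
    Finset (Finset (Fin L → Bool)) :=
  Finset.univ.filter (fun S' : Finset (Fin L → Bool) =>
    ∃ Lost F : Finset (Fin L → Bool), Lost ⊆ S ∧ F ⊆ S ∧ Disjoint Lost F ∧
      Lost.card ≤ s ∧ F.card ≤ t ∧
      ∃ f : (Fin L → Bool) → (Fin L → Bool),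
        (∀ x ∈ F, f x ≠ x) ∧ S' = (S \ (Lost ∪ F)) ∪ F.image f)

open Classical in
theorem ball_bullet_lower_bound (L M s t : ℕ) (S : Finset (Fin L → Bool))
    (hS : S.card = M) (hst : s + t ≤ M) (hM : M ≤ 2 ^ L) :
    M.choose (s + t) * (2 ^ L - M).choose t
      ≤ ((ballBullet L s t S).filter (fun S' => S'.card = M - s)).card := by
  classical
  have hcardU : Fintype.card (Fin L → Bool) = 2 ^ L := by
    simp [Fintype.card_fun]
  have hcompl : Sᶜ.card = 2 ^ L - M := by
    rw [Finset.card_compl, hcardU, hS]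
  set T : Finset (Finset (Fin L → Bool) × Finset (Fin L → Bool)) :=
    (S.powersetCard (M - (s + t))) ×ˢ (Sᶜ.powersetCard t) with hT
  have hTcard : T.card = M.choose (s + t) * (2 ^ L - M).choose t := by
    rw [hT, Finset.card_product, Finset.card_powersetCard, Finset.card_powersetCard,
      hS, hcompl, Nat.choose_symm hst]
  rw [← hTcard]
  apply Finset.card_le_card_of_injOn (fun p => p.1 ∪ p.2)
  · -- maps into
    rintro ⟨G, F'⟩ hp
    simp only [Finset.mem_coe, hT, Finset.mem_product, Finset.mem_powersetCard] at hp
    obtain ⟨⟨hGS, hGcard⟩, hF'c, hF'card⟩ := hp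
    have hF'S : ∀ x ∈ F', x ∉ S := fun x hx => by
      simpa using hF'c hx
    have hdisj : Disjoint G F' :=
      Finset.disjoint_left.mpr (fun a ha ha' => hF'S a ha' (hGS ha))
    -- choose F ⊆ S \ G with card t
    have hDcard : (S \ G).card = s + t := by
      rw [Finset.card_sdiff_of_subset hGS, hS, hGcard]; omega
    obtain ⟨F, hFD, hFcard⟩ : ∃ F ⊆ S \ G, F.card = t :=
      Finset.exists_subset_card_eq (by omega)
    set Lost := (S \ G) \ F with hLost
    have hLostS : Lost ⊆ S := (Finset.sdiff_subset).trans Finset.sdiff_subset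
    have hFS : F ⊆ S := hFD.trans Finset.sdiff_subset
    have hLostcard : Lost.card = s := by
      rw [hLost, Finset.card_sdiff_of_subset hFD, hDcard, hFcard]; omega
    -- bijection from F to F'
    have hcards : F.card = F'.card := by rw [hFcard, hF'card]
    let e : F ≃ F' := Finset.equivOfCardEq hcards
    let f : (Fin L → Bool) → (Fin L → Bool) :=
      fun x => if h : x ∈ F then (e ⟨x, h⟩ : Fin L → Bool) else x
    have himg : F.image f = F' := by
      ext y
      simp only [Finset.mem_image]
      constructor
      · rintro ⟨x, hx, rfl⟩
        simp only [f, dif_pos hx]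
        exact (e ⟨x, hx⟩).2
      · intro hy
        refine ⟨(e.symm ⟨y, hy⟩ : F), (e.symm ⟨y, hy⟩).2, ?_⟩
        simp [f, (e.symm ⟨y, hy⟩).2]
    simp only [Finset.mem_coe, Finset.mem_filter, ballBullet, Finset.mem_univ, true_and]
    constructor
    · refine ⟨Lost, F, hLostS, hFS, Finset.sdiff_disjoint, le_of_eq hLostcard,
        le_of_eq hFcard, f, ?_, ?_⟩
      · intro x hx
        have : f x ∈ F' := by
          simp only [f, dif_pos hx]; exact (e ⟨x, hx⟩).2
        exact fun hfx => hF'S x (hfx ▸ this) (hFS hx)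
      · have hLF : Lost ∪ F = S \ G := by
          rw [hLost]; exact Finset.sdiff_union_of_subset hFD
        rw [hLF, himg, Finset.sdiff_sdiff_eq_self hGS]
    · rw [Finset.card_union_of_disjoint hdisj, hGcard, hF'card]; omega
  · -- injective
    rintro ⟨G, F'⟩ hp ⟨H, H'⟩ hq heq
    dsimp only at heq
    simp only [Finset.mem_coe, hT, Finset.mem_product, Finset.mem_powersetCard] at hp hq
    have h1 : (G ∪ F') ∩ S = G := by
      rw [Finset.union_inter_distrib_right, Finset.inter_eq_left.mpr hp.1.1,
        Finset.union_eq_left]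
      intro x hx
      rcases Finset.mem_inter.mp hx with ⟨hx1, hx2⟩
      exact absurd hx2 (by simpa using hp.2.1 hx1)
    have h2 : (H ∪ H') ∩ S = H := by
      rw [Finset.union_inter_distrib_right, Finset.inter_eq_left.mpr hq.1.1,
        Finset.union_eq_left]
      intro x hx
      rcases Finset.mem_inter.mp hx with ⟨hx1, hx2⟩
      exact absurd hx2 (by simpa using hq.2.1 hx1)
    have hGH : G = H := by rw [← h1, ← h2, heq]
    have h3 : (G ∪ F') \ S = F' := by
      rw [Finset.union_sdiff_distrib, Finset.sdiff_eq_empty_iff_subset.mpr hp.1.1,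
        Finset.empty_union, Finset.sdiff_eq_self_iff_disjoint]
      refine Finset.disjoint_left.mpr fun a ha hs => ?_
      have := hp.2.1 ha; simp at this; exact this hs
    have h4 : (H ∪ H') \ S = H' := by
      rw [Finset.union_sdiff_distrib, Finset.sdiff_eq_empty_iff_subset.mpr hq.1.1,
        Finset.empty_union, Finset.sdiff_eq_self_iff_disjoint]
      refine Finset.disjoint_left.mpr fun a ha hs => ?_
      have := hq.2.1 ha; simp at this; exact this hs
    have hF'H' : F' = H' := by rw [← h3, ← h4, heq]
    simp [hGH, hF'H']
end

section
/- Under the hypotheses of the sphere-packing argument for the (s,t,•) channel, any (s,t,•)-correcting code C of M-element subsets of {0,1}^L satisfies |C| ≤ C(2^L, M−s) / (C(M, s+t)·C(2^L−M, t)). -/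
open Classical in
noncomputable def outSet (L s t M : ℕ) (S : Finset (Fin L → Bool)) :
    Finset (Finset (Fin L → Bool)) :=
  ((S.powersetCard (M - s - t)) ×ˢ (Sᶜ.powersetCard t)).image (fun p => p.1 ∪ p.2)

open Classical in
lemma outSet_card (L s t M : ℕ) (hst : s + t ≤ M) (S : Finset (Fin L → Bool))
    (hS : S.card = M) :
    (outSet L s t M S).card = M.choose (s + t) * (2 ^ L - M).choose t := by
  classical
  rw [outSet, Finset.card_image_of_injOn]
  · rw [Finset.card_product, Finset.card_powersetCard, Finset.card_powersetCard,
      Finset.card_compl, hS]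
    have h1 : M - s - t = M - (s + t) := by omega
    rw [h1, Nat.choose_symm hst]
    simp [Fintype.card_fun]
  · rintro ⟨K, E⟩ hKE ⟨K', E'⟩ hKE' h
    simp only [Finset.mem_coe, Finset.mem_product, Finset.mem_powersetCard] at hKE hKE'
    obtain ⟨⟨hK, _⟩, ⟨hE, _⟩⟩ := hKE
    obtain ⟨⟨hK', _⟩, ⟨hE', _⟩⟩ := hKE'
    simp only at h
    have dE : Disjoint E S := Finset.disjoint_left.mpr fun a ha h => (Finset.mem_compl.mp (hE ha)) h
    have dE' : Disjoint E' S := Finset.disjoint_left.mpr fun a ha h => (Finset.mem_compl.mp (hE' ha)) h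
    have h1 : (K ∪ E) ∩ S = K := by
      ext a
      simp only [Finset.mem_inter, Finset.mem_union]
      exact ⟨fun ⟨h', hs⟩ => h'.elim id (fun h'' => absurd hs (Finset.disjoint_left.mp dE h'')),
        fun h' => ⟨Or.inl h', hK h'⟩⟩
    have h1' : (K' ∪ E') ∩ S = K' := by
      ext a
      simp only [Finset.mem_inter, Finset.mem_union]
      exact ⟨fun ⟨h', hs⟩ => h'.elim id (fun h'' => absurd hs (Finset.disjoint_left.mp dE' h'')),
        fun h' => ⟨Or.inl h', hK' h'⟩⟩
    have h2 : (K ∪ E) \ S = E := by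
      ext a
      simp only [Finset.mem_sdiff, Finset.mem_union]
      exact ⟨fun ⟨h', hs⟩ => h'.elim (fun h'' => absurd (hK h'') hs) id,
        fun h' => ⟨Or.inr h', Finset.disjoint_left.mp dE h'⟩⟩
    have h2' : (K' ∪ E') \ S = E' := by
      ext a
      simp only [Finset.mem_sdiff, Finset.mem_union]
      exact ⟨fun ⟨h', hs⟩ => h'.elim (fun h'' => absurd (hK' h'') hs) id,
        fun h' => ⟨Or.inr h', Finset.disjoint_left.mp dE' h'⟩⟩
    have := h1.symm.trans (h ▸ h1')
    have := h2.symm.trans (h ▸ h2')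
    simp_all

open Classical in
lemma outSet_subset_ball (L s t M : ℕ) (hst : s + t ≤ M) (S : Finset (Fin L → Bool))
    (hS : S.card = M) : outSet L s t M S ⊆ ballBullet L s t S := by
  classical
  intro S' hS'
  simp only [outSet, Finset.mem_image, Finset.mem_product, Finset.mem_powersetCard,
    Prod.exists] at hS'
  obtain ⟨K, E, ⟨⟨hK, hKc⟩, hE, hEc⟩, rfl⟩ := hS'
  have hD : (S \ K).card = s + t := by
    rw [Finset.card_sdiff_of_subset hK, hS, hKc]; omega
  obtain ⟨Lost, hLsub, hLc⟩ := Finset.exists_subset_card_eq (s := S \ K) (n := s) (by omega)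
  set F := (S \ K) \ Lost with hF
  have hFc : F.card = t := by rw [hF, Finset.card_sdiff_of_subset hLsub, hD, hLc]; omega
  have hFE : F.card = E.card := by rw [hFc, hEc]
  have e := Finset.equivOfCardEq hFE
  refine Finset.mem_filter.mpr ⟨Finset.mem_univ _, Lost, F,
    hLsub.trans (Finset.sdiff_subset), (Finset.sdiff_subset).trans Finset.sdiff_subset,
    Finset.disjoint_sdiff, le_of_eq hLc, le_of_eq hFc,
    fun x => if hx : x ∈ F then (e ⟨x, hx⟩ : Fin L → Bool) else x, ?_, ?_⟩
  · intro x hx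
    simp only [dif_pos hx]
    have hmem : (e ⟨x, hx⟩ : Fin L → Bool) ∈ E := (e ⟨x, hx⟩).2
    have hxS : x ∈ S := Finset.sdiff_subset (Finset.sdiff_subset hx)
    intro heq
    rw [heq] at hmem
    exact (Finset.mem_compl.mp (hE hmem)) hxS
  · have hLF : Lost ∪ F = S \ K := Finset.union_sdiff_of_subset hLsub
    have himg : F.image (fun x => if hx : x ∈ F then (e ⟨x, hx⟩ : Fin L → Bool) else x) = E := by
      apply Finset.eq_of_subset_of_card_le
      · intro y hy
        simp only [Finset.mem_image] at hy
        obtain ⟨x, hx, rfl⟩ := hy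
        simp only [dif_pos hx]
        exact (e ⟨x, hx⟩).2
      · rw [Finset.card_image_of_injOn, hFE]
        intro a ha b hb hab
        simp only at hab
        rw [dif_pos (Finset.mem_coe.mp ha), dif_pos (Finset.mem_coe.mp hb)] at hab
        have := e.injective (Subtype.ext hab)
        exact Subtype.ext_iff.mp this
    rw [hLF, himg, Finset.sdiff_sdiff_self_left, Finset.inter_eq_right.mpr hK]

theorem sphere_packing_bullet (L M s t : ℕ)
    (hst : s + t ≤ M) (hM : M + t ≤ 2 ^ L)
    (C : Finset (Finset (Fin L → Bool)))
    (hcard : ∀ S ∈ C, S.card = M)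
    (hdisj : ∀ S₁ ∈ C, ∀ S₂ ∈ C, S₁ ≠ S₂ →
      ballBullet L s t S₁ ∩ ballBullet L s t S₂ = ∅) :
    (C.card : ℝ) ≤ ((2 ^ L).choose (M - s) : ℝ)
      / ((M.choose (s + t) : ℝ) * ((2 ^ L - M).choose t : ℝ)) := by
  classical
  have hpos1 : 0 < M.choose (s + t) := Nat.choose_pos hst
  have hpos2 : 0 < (2 ^ L - M).choose t := Nat.choose_pos (by omega)
  have key : C.card * (M.choose (s + t) * (2 ^ L - M).choose t) ≤ (2 ^ L).choose (M - s) := by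
    have hb : (C.biUnion (outSet L s t M)).card
        = ∑ S ∈ C, (outSet L s t M S).card := by
      apply Finset.card_biUnion
      intro S₁ h₁ S₂ h₂ hne
      have := hdisj S₁ h₁ S₂ h₂ hne
      refine Finset.disjoint_left.mpr fun x hx₁ hx₂ => ?_
      have : x ∈ ballBullet L s t S₁ ∩ ballBullet L s t S₂ :=
        Finset.mem_inter.mpr ⟨outSet_subset_ball L s t M hst S₁ (hcard S₁ h₁) hx₁,
          outSet_subset_ball L s t M hst S₂ (hcard S₂ h₂) hx₂⟩
      rw [hdisj S₁ h₁ S₂ h₂ hne] at this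
      exact absurd this (Finset.notMem_empty x)
    have hsum : ∑ S ∈ C, (outSet L s t M S).card
        = C.card * (M.choose (s + t) * (2 ^ L - M).choose t) := by
      rw [Finset.sum_congr rfl (fun S hS => outSet_card L s t M hst S (hcard S hS)),
        Finset.sum_const, smul_eq_mul]
    have hsub : C.biUnion (outSet L s t M)
        ⊆ (Finset.univ : Finset (Fin L → Bool)).powersetCard (M - s) := by
      intro x hx
      obtain ⟨S, hSC, hxS⟩ := Finset.mem_biUnion.mp hx
      simp only [outSet, Finset.mem_image, Finset.mem_product, Finset.mem_powersetCard,
        Prod.exists] at hxS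
      obtain ⟨K, E, ⟨⟨hK, hKc⟩, hE, hEc⟩, rfl⟩ := hxS
      rw [Finset.mem_powersetCard]
      refine ⟨Finset.subset_univ _, ?_⟩
      have dKE : Disjoint K E := Finset.disjoint_left.mpr fun a ha h =>
        (Finset.mem_compl.mp (hE h)) (hK ha)
      rw [Finset.card_union_of_disjoint dKE, hKc, hEc]
      have := hcard S hSC
      omega
    have h1 : C.card * (M.choose (s + t) * (2 ^ L - M).choose t)
        ≤ ((Finset.univ : Finset (Fin L → Bool)).powersetCard (M - s)).card := by
      rw [← hsum, ← hb]; exact Finset.card_le_card hsub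
    have h2 : ((Finset.univ : Finset (Fin L → Bool)).powersetCard (M - s)).card
        = (2 ^ L).choose (M - s) := by
      rw [Finset.card_powersetCard, Finset.card_univ]
      simp [Fintype.card_fun]
    omega
  rw [le_div_iff₀ (by positivity)]
  exact_mod_cast key
end

section
/- Let Y ⊆ Σ₂^L have V(x) = {y : B(x) ∩ B(y) ≠ ∅} with |V(x)| ≤ V for all x, where B(·) are ε-error balls. Then the number of M-element subsets S of {0,1}^L whose largest subset forming a code with pairwise disjoint ε-error balls has size at most K is at most C(2^L, K)·C(K·V, M−K). -/
open Classical in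
theorem count_sets_small_code (L M K Vmax : ℕ) {β : Type*}
    (B : (Fin L → Bool) → Finset β)
    (hV : ∀ x : Fin L → Bool,
      (Finset.univ.filter (fun y : Fin L → Bool => (B x ∩ B y).Nonempty)).card ≤ Vmax)
    (hKM : K ≤ M) :
    ((Finset.univ.filter (fun S : Finset (Fin L → Bool) =>
        S.card = M ∧
        ∀ Y ⊆ S, (∀ y₁ ∈ Y, ∀ y₂ ∈ Y, y₁ ≠ y₂ → B y₁ ∩ B y₂ = ∅) →
          Y.card ≤ K)).card)
      ≤ (2 ^ L).choose K * (K * Vmax).choose (M - K) := by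
  let α := (Fin L → Bool)
  set N : Finset α → Finset α := fun T =>
    T.biUnion (fun t => Finset.univ.filter (fun z => (B t ∩ B z).Nonempty)) with hNdef
  set target : Finset (Finset α × Finset α) :=
    (Finset.univ.powersetCard K).biUnion
      (fun T => ((N T).powersetCard (M - K)).image (Prod.mk T)) with htarget
  have hsurj : Set.SurjOn (fun p : Finset α × Finset α => p.1 ∪ p.2)
      (target : Set (Finset α × Finset α))
      ((Finset.univ.filter (fun S : Finset α =>
        S.card = M ∧
        ∀ Y ⊆ S, (∀ y₁ ∈ Y, ∀ y₂ ∈ Y, y₁ ≠ y₂ → B y₁ ∩ B y₂ = ∅) →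
          Y.card ≤ K) : Finset (Finset α)) : Set (Finset α)) := by
    intro S hS
    simp only [Finset.coe_filter, Set.mem_setOf_eq, Finset.mem_univ, true_and] at hS
    obtain ⟨hSM, hcode⟩ := hS
    -- maximum code inside S
    set 𝒞 : Finset (Finset α) := S.powerset.filter
      (fun Y => ∀ y₁ ∈ Y, ∀ y₂ ∈ Y, y₁ ≠ y₂ → B y₁ ∩ B y₂ = ∅) with h𝒞
    have h𝒞ne : 𝒞.Nonempty := ⟨∅, by simp [h𝒞]⟩
    obtain ⟨Y, hY𝒞, hYmax⟩ := Finset.exists_max_image 𝒞 Finset.card h𝒞ne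
    simp only [h𝒞, Finset.mem_filter, Finset.mem_powerset] at hY𝒞
    obtain ⟨hYS, hYcode⟩ := hY𝒞
    have hYK : Y.card ≤ K := hcode Y hYS hYcode
    obtain ⟨T, hYT, hTS, hTK⟩ := Finset.exists_subsuperset_card_eq hYS hYK
      (by rw [hSM]; exact hKM)
    refine ⟨(T, S \ T), ?_, ?_⟩
    · -- membership in target
      simp only [htarget, Finset.coe_biUnion, Finset.mem_coe, Set.mem_iUnion]
      refine ⟨T, by simp [Finset.mem_powersetCard, hTK], ?_⟩
      rw [Finset.mem_image]
      refine ⟨S \ T, ?_, rfl⟩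
      rw [Finset.mem_powersetCard]
      constructor
      · -- S \ T ⊆ N T
        intro s hs
        have hsS : s ∈ S := (Finset.mem_sdiff.mp hs).1
        have hsY : s ∉ Y := fun h => (Finset.mem_sdiff.mp hs).2 (hYT h)
        -- there is y ∈ Y with (B y ∩ B s).Nonempty
        have : ∃ y ∈ Y, (B y ∩ B s).Nonempty := by
          by_contra hcon
          push_neg at hcon
          have hins : insert s Y ∈ 𝒞 := by
            simp only [h𝒞, Finset.mem_filter, Finset.mem_powerset]
            refine ⟨Finset.insert_subset hsS hYS, ?_⟩
            intro y₁ hy₁ y₂ hy₂ hne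
            rcases Finset.mem_insert.mp hy₁ with h1 | h1 <;>
              rcases Finset.mem_insert.mp hy₂ with h2 | h2
            · exact absurd (h1.trans h2.symm) hne
            · subst h1
              rw [Finset.inter_comm]
              exact hcon y₂ h2
            · subst h2
              exact hcon y₁ h1
            · exact hYcode y₁ h1 y₂ h2 hne
          have := hYmax _ hins
          rw [Finset.card_insert_of_notMem hsY] at this
          omega
        obtain ⟨y, hyY, hy⟩ := this
        simp only [hNdef, Finset.mem_biUnion, Finset.mem_filter, Finset.mem_univ,
          true_and]
        exact ⟨y, hYT hyY, hy⟩
      · rw [Finset.card_sdiff_of_subset hTS, hSM, hTK]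
    · -- union recovers S
      simp only
      exact Finset.union_sdiff_of_subset hTS
  have h1 := Finset.card_le_card_of_surjOn _ hsurj
  refine h1.trans ?_
  have h2 : target.card ≤ ∑ T ∈ Finset.univ.powersetCard K,
      (((N T).powersetCard (M - K)).image (Prod.mk T)).card :=
    Finset.card_biUnion_le
  refine h2.trans ?_
  have h3 : ∀ T ∈ Finset.univ.powersetCard K,
      (((N T).powersetCard (M - K)).image (Prod.mk T)).card
        ≤ (K * Vmax).choose (M - K) := by
    intro T hT
    have hTK : T.card = K := (Finset.mem_powersetCard.mp hT).2
    have hNcard : (N T).card ≤ K * Vmax := by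
      calc (N T).card ≤ ∑ t ∈ T,
          (Finset.univ.filter (fun z => (B t ∩ B z).Nonempty)).card :=
            Finset.card_biUnion_le
        _ ≤ ∑ _t ∈ T, Vmax := Finset.sum_le_sum (fun t _ => hV t)
        _ = K * Vmax := by rw [Finset.sum_const, hTK, smul_eq_mul]
    calc (((N T).powersetCard (M - K)).image (Prod.mk T)).card
        ≤ ((N T).powersetCard (M - K)).card := Finset.card_image_le
      _ = (N T).card.choose (M - K) := Finset.card_powersetCard _ _
      _ ≤ (K * Vmax).choose (M - K) := Nat.choose_le_choose _ hNcard
  have h4 : (∑ T ∈ Finset.univ.powersetCard K,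
      (((N T).powersetCard (M - K)).image (Prod.mk T)).card)
      ≤ (2 ^ L).choose K * (K * Vmax).choose (M - K) := by
   calc ∑ T ∈ Finset.univ.powersetCard K,
      (((N T).powersetCard (M - K)).image (Prod.mk T)).card
      ≤ ∑ _T ∈ Finset.univ.powersetCard K, (K * Vmax).choose (M - K) :=
        Finset.sum_le_sum h3
    _ = (Finset.univ.powersetCard K).card * (K * Vmax).choose (M - K) := by
        rw [Finset.sum_const, smul_eq_mul]
    _ = (2 ^ L).choose K * (K * Vmax).choose (M - K) := by
        rw [Finset.card_powersetCard, Finset.card_univ]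
        congr 2
        simp [α]
   exact le_rfl
  exact h4
end

section
/- For every x ∈ {0,1}^L, the size of the ε-deletion sphere satisfies C(||x|| − ε + 1, ε) ≤ |S_ε^D(x)| ≤ C(||x|| + ε − 1, ε), where ||x|| is the number of runs of x. -/
/-- The number of runs of a binary word, i.e. the number of maximal blocks of
equal consecutive symbols. -/
def runs (x : List Bool) : ℕ := (x.destutter (· ≠ ·)).length

/-- Decode a run-length encoding starting with symbol `b`. -/
def decode : Bool → List ℕ → List Bool
  | _, [] => []
  | b, a :: l => List.replicate a b ++ decode (!b) l

lemma decode_length (l : List ℕ) (b : Bool) : (decode b l).length = l.sum := by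
  induction l generalizing b with
  | nil => rfl
  | cons a l ih => simp [decode, ih]

lemma destutter'_replicate_append (k : ℕ) (b : Bool) (t : List Bool) :
    List.destutter' (· ≠ ·) b (List.replicate k b ++ t) = List.destutter' (· ≠ ·) b t := by
  induction k with
  | zero => rfl
  | succ n ih => simp [List.replicate_succ, List.destutter'_cons, ih]

lemma destutter'_decode_length (l : List ℕ) (b : Bool)
    (hl : ∀ a ∈ l, 1 ≤ a) :
    (List.destutter' (· ≠ ·) b (decode (!b) l)).length = l.length + 1 := by
  induction l generalizing b with
  | nil => rfl
  | cons a l ih =>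
    obtain ⟨a', rfl⟩ : ∃ a', a = a' + 1 := ⟨a - 1, by have := hl a (by simp); omega⟩
    have hb : b ≠ !b := by simp
    rw [decode, List.replicate_succ, List.cons_append, List.destutter'_cons_pos _ hb]
    have := ih (!b) (fun x hx => hl x (by simp [hx]))
    rw [Bool.not_not] at this
    simp [destutter'_replicate_append, this]

lemma runs_decode (l : List ℕ) (b : Bool) (hl : ∀ a ∈ l, 1 ≤ a) :
    runs (decode b l) = l.length := by
  cases l with
  | nil => rfl
  | cons a l =>
    obtain ⟨a', rfl⟩ : ∃ a', a = a' + 1 := ⟨a - 1, by have := hl a (by simp); omega⟩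
    rw [decode, List.replicate_succ, List.cons_append, runs, List.destutter]
    rw [destutter'_replicate_append]
    have := destutter'_decode_length l b (fun x hx => hl x (by simp [hx]))
    simp [this]

lemma exists_encoding (x : List Bool) :
    ∃ b l, (∀ a ∈ l, 1 ≤ a) ∧ decode b l = x := by
  induction x with
  | nil => exact ⟨true, [], by simp, rfl⟩
  | cons c t ih =>
    obtain ⟨b, l, hl, hdec⟩ := ih
    cases l with
    | nil =>
      refine ⟨c, [1], by simp, ?_⟩
      simp [decode] at hdec ⊢
      exact hdec
    | cons a rest =>
      by_cases hc : c = b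
      · subst hc
        refine ⟨c, (a + 1) :: rest, ?_, ?_⟩
        · intro x hx; rcases List.mem_cons.1 hx with h | h
          · omega
          · exact hl x (by simp [h])
        · rw [decode, List.replicate_succ, List.cons_append]
          rw [decode] at hdec
          rw [hdec]
      · refine ⟨c, 1 :: a :: rest, ?_, ?_⟩
        · intro x hx; rcases List.mem_cons.1 hx with h | h
          · omega
          · exact hl x h
        · have : b = !c := by cases b <;> cases c <;> simp_all
          rw [decode]
          simp only [List.replicate_one, List.singleton_append, ← this, hdec]


lemma decode_sublist {c l : List ℕ} (b : Bool) (h : List.Forall₂ (· ≤ ·) c l) :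
    (decode b c).Sublist (decode b l) := by
  induction h generalizing b with
  | nil => exact List.Sublist.refl _
  | cons hab _ ih =>
    exact List.Sublist.append ((List.replicate_sublist_replicate b).2 hab) (ih (!b))

lemma sublist_decode {y : List Bool} {l : List ℕ} {b : Bool} (h : y.Sublist (decode b l)) :
    ∃ c, List.Forall₂ (· ≤ ·) c l ∧ decode b c = y := by
  induction l generalizing b y with
  | nil => exact ⟨[], List.Forall₂.nil, by simpa [decode] using (List.sublist_nil.1 h).symm⟩
  | cons a l ih =>
    rw [decode, List.sublist_append_iff] at h
    obtain ⟨y₁, y₂, rfl, h₁, h₂⟩ := h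
    obtain ⟨k, hk, rfl⟩ := List.sublist_replicate_iff.1 h₁
    obtain ⟨c, hc, rfl⟩ := ih h₂
    exact ⟨k :: c, List.Forall₂.cons hk hc, rfl⟩

def comp : ℕ → ℕ → Finset (List ℕ)
  | 0, 0 => {([] : List ℕ)}
  | 0, _+1 => ∅
  | r+1, 0 => {List.replicate (r+1) 0}
  | r+1, ε+1 =>
      (comp r (ε+1)).image (0 :: ·) ∪
        (comp (r+1) ε).image (fun c => (c.headI + 1) :: c.tail)
  termination_by r ε => (r, ε)

lemma comp_complete : ∀ (ε r : ℕ) (c : List ℕ), c.length = r → c.sum = ε → c ∈ comp r ε := by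
  intro ε
  induction ε with
  | zero =>
    intro r c hlen hsum
    have : c = List.replicate r 0 :=
      List.eq_replicate_iff.2 ⟨hlen, List.sum_eq_zero_iff.mp hsum⟩
    subst this
    cases r with
    | zero => simp [comp]
    | succ n => simp [comp]
  | succ ε ihε =>
    intro r
    induction r with
    | zero => intro c hlen hsum; simp at hlen; subst hlen; simp at hsum
    | succ r ihr =>
      intro c hlen hsum
      cases c with
      | nil => simp at hlen
      | cons a t =>
        rw [comp, Finset.mem_union]
        cases a with
        | zero =>
          exact Or.inl (Finset.mem_image.2
            ⟨t, ihr t (by simpa using hlen) (by simpa using hsum), rfl⟩)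
        | succ a' =>
          refine Or.inr (Finset.mem_image.2
            ⟨a' :: t, ihε (r+1) (a' :: t) (by simpa using hlen) ?_, rfl⟩)
          simp at hsum ⊢; omega

lemma comp_card_le (r ε : ℕ) :
    (comp (r+1) (ε+1)).card ≤ (comp r (ε+1)).card + (comp (r+1) ε).card := by
  rw [comp]
  exact le_trans (Finset.card_union_le _ _)
    (Nat.add_le_add Finset.card_image_le Finset.card_image_le)

lemma comp_card : ∀ (ε r : ℕ), (comp (r+1) ε).card ≤ (r + ε).choose ε := by
  intro ε
  induction ε with
  | zero => intro r; rw [comp]; simp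
  | succ ε ihε =>
    intro r
    induction r with
    | zero =>
      refine le_trans (comp_card_le 0 ε) ?_
      have h0 : (comp 0 (ε+1)).card = 0 := by rw [comp]; simp
      rw [h0, Nat.zero_add, Nat.zero_add]
      calc (comp 1 ε).card ≤ (0 + ε).choose ε := ihε 0
        _ ≤ (0 + (ε + 1)).choose (ε + 1) := by simp
    | succ r ihr =>
      refine le_trans (comp_card_le (r+1) ε) ?_
      have h1 : (comp (r+1) (ε+1)).card ≤ (r + (ε+1)).choose (ε+1) := ihr
      have h2 : (comp (r+2) ε).card ≤ (r + 1 + ε).choose ε := ihε (r+1)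
      calc (comp (r+1) (ε+1)).card + (comp (r+2) ε).card
          ≤ (r + ε + 1).choose (ε+1) + (r + ε + 1).choose ε := by
            refine Nat.add_le_add (le_trans h1 (le_of_eq (by ring_nf))) (le_trans h2 (le_of_eq (by ring_nf)))
        _ = (r + 1 + (ε + 1)).choose (ε + 1) := by
            rw [add_comm ((r + ε + 1).choose (ε+1))]
            rw [← Nat.choose_succ_succ]
            congr 1
            omega

/-- Finset of boolean lists of length `r` with `ε` trues, no two adjacent;
if the flag is `true` the list may not start with `true`. -/
def noAdj : Bool → ℕ → ℕ → Finset (List Bool)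
  | _, 0, 0 => {([] : List Bool)}
  | _, 0, _+1 => ∅
  | _, r+1, 0 => {List.replicate (r+1) false}
  | true, r+1, ε+1 => (noAdj false r (ε+1)).image (false :: ·)
  | false, r+1, ε+1 =>
      (noAdj false r (ε+1)).image (false :: ·) ∪ (noAdj true r ε).image (true :: ·)

lemma noAdj_sound : ∀ (r : ℕ) (prev : Bool) (ε : ℕ) (d : List Bool), d ∈ noAdj prev r ε →
    d.length = r ∧ d.count true = ε ∧
      List.Chain' (fun p q => ¬(p = true ∧ q = true)) d ∧
      (prev = true → d.head? ≠ some true) := by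
  intro r
  induction r with
  | zero =>
    intro prev ε d hd
    cases ε with
    | zero =>
      cases prev <;> simp [noAdj] at hd <;> subst hd <;> simp <;> exact List.IsChain.nil
    | succ ε => cases prev <;> simp [noAdj] at hd
  | succ r ih =>
    intro prev ε d hd
    cases ε with
    | zero =>
      have hd' : d = List.replicate (r+1) false := by
        cases prev <;> simpa [noAdj] using hd
      subst hd'
      refine ⟨by simp, by simp [List.count_replicate], ?_, by simp [List.replicate_succ]⟩
      exact List.isChain_replicate_of_rel _ (by simp)
    | succ ε =>
      have key : ∀ d' : List Bool, d' ∈ noAdj false r (ε+1) → d = false :: d' →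
          d.length = r + 1 ∧ d.count true = ε + 1 ∧
            List.Chain' (fun p q => ¬(p = true ∧ q = true)) d ∧
            (prev = true → d.head? ≠ some true) := by
        intro d' hd' hdeq
        subst hdeq
        obtain ⟨h1, h2, h3, _⟩ := ih false (ε+1) d' hd'
        refine ⟨by simp [h1], by simp [h2], ?_, by simp⟩
        unfold List.Chain'; rw [List.isChain_cons]
        exact ⟨fun h _ => by simp, h3⟩
      cases prev with
      | true =>
        simp only [noAdj, Finset.mem_image] at hd
        obtain ⟨d', hd', rfl⟩ := hd
        exact key d' hd' rfl
      | false =>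
        simp only [noAdj, Finset.mem_union, Finset.mem_image] at hd
        rcases hd with ⟨d', hd', rfl⟩ | ⟨d', hd', rfl⟩
        · exact key d' hd' rfl
        · obtain ⟨h1, h2, h3, h4⟩ := ih true ε d' hd'
          refine ⟨by simp [h1], by simp [h2], ?_, by simp⟩
          unfold List.Chain'; rw [List.isChain_cons]
          refine ⟨?_, h3⟩
          intro h hh
          rintro ⟨-, rfl⟩
          exact (h4 rfl) (by simpa using hh)

lemma noAdj_card : ∀ r : ℕ,
    (∀ ε, ε ≤ r → (r - ε).choose ε ≤ (noAdj true r ε).card) ∧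
      (∀ ε, ε ≤ r → (r - ε + 1).choose ε ≤ (noAdj false r ε).card) := by
  intro r
  induction r with
  | zero =>
    constructor <;> intro ε hε <;> interval_cases ε <;> simp [noAdj]
  | succ r ih =>
    obtain ⟨ihT, ihF⟩ := ih
    have hconsinj : ∀ b : Bool, Function.Injective (b :: · : List Bool → List Bool) := by
      intro b x y h; simpa using h
    have hA : ∀ ε, ε ≤ r + 1 → (r - ε).choose (ε + 1) ≤ (noAdj false r (ε+1)).card := by
      intro ε hε
      by_cases h : ε + 1 ≤ r
      · have := ihF (ε+1) h
        have heq : r - (ε+1) + 1 = r - ε := by omega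
        rwa [heq] at this
      · have : r - ε = 0 := by omega
        rw [this, Nat.choose_eq_zero_of_lt (by omega)]
        exact Nat.zero_le _
    constructor
    · intro ε hε
      cases ε with
      | zero => simp [noAdj]
      | succ ε =>
        rw [noAdj, Finset.card_image_of_injective _ (hconsinj false)]
        have heq : r + 1 - (ε + 1) = r - ε := by omega
        rw [heq]
        exact hA ε (by omega)
    · intro ε hε
      cases ε with
      | zero => simp [noAdj]
      | succ ε =>
        rw [noAdj]
        have hdisj : Disjoint ((noAdj false r (ε+1)).image (false :: ·))
            ((noAdj true r ε).image (true :: ·)) := by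
          rw [Finset.disjoint_left]
          rintro a ha hb
          rw [Finset.mem_image] at ha hb
          obtain ⟨u, -, hu⟩ := ha
          obtain ⟨v, -, hv⟩ := hb
          rw [← hu] at hv
          simp at hv
        rw [Finset.card_union_of_disjoint hdisj,
          Finset.card_image_of_injective _ (hconsinj false),
          Finset.card_image_of_injective _ (hconsinj true)]
        have h1 := hA ε (by omega)
        have h2 := ihT ε (by omega)
        have heq : r + 1 - (ε + 1) + 1 = (r - ε) + 1 := by omega
        rw [heq, Nat.choose_succ_succ, Nat.add_comm]
        exact Nat.add_le_add h1 h2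


def subB (l : List ℕ) (d : List Bool) : List ℕ :=
  List.zipWith (fun a t => if t then a - 1 else a) l d

lemma subB_forall₂ : ∀ (l : List ℕ) (d : List Bool), d.length = l.length →
    List.Forall₂ (· ≤ ·) (subB l d) l := by
  intro l
  induction l with
  | nil => intro d hd; simp [subB]
  | cons a l ih =>
    intro d hd
    cases d with
    | nil => simp at hd
    | cons p d' =>
      rw [subB, List.zipWith_cons_cons]
      refine List.Forall₂.cons ?_ (ih d' (by simpa using hd))
      show (if p = true then a - 1 else a) ≤ a
      cases p <;> simp

lemma subB_sum : ∀ (l : List ℕ) (d : List Bool), (∀ a ∈ l, 1 ≤ a) → d.length = l.length →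
    (subB l d).sum + d.count true = l.sum := by
  intro l
  induction l with
  | nil => intro d _ hd; simp at hd; simp [subB, hd]
  | cons a l ih =>
    intro d hl hd
    cases d with
    | nil => simp at hd
    | cons p d' =>
      rw [subB, List.zipWith_cons_cons]
      have ha : 1 ≤ a := hl a (by simp)
      have := ih d' (fun x hx => hl x (by simp [hx])) (by simpa using hd)
      rw [subB] at this
      cases p <;> simp [List.count_cons] <;> omega

lemma takeWhile_replicate_append (b : Bool) (k : ℕ) (t : List Bool) :
    (List.replicate k b ++ t).takeWhile (· == b) =
      List.replicate k b ++ t.takeWhile (· == b) := by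
  induction k with
  | zero => simp
  | succ n ih => simp [List.replicate_succ, List.takeWhile_cons, ih]

lemma takeWhile_decode_not (b : Bool) (m : List ℕ)
    (hm : m = [] ∨ ∃ k rest, m = (k+1) :: rest) :
    (decode (!b) m).takeWhile (· == b) = [] := by
  rcases hm with rfl | ⟨k, rest, rfl⟩
  · simp [decode]
  · rw [decode, List.replicate_succ, List.cons_append, List.takeWhile_cons]
    simp

lemma lead_contra (b : Bool) (a : ℕ) (ha : 1 ≤ a) (l' : List ℕ) (d' e' : List Bool)
    (hl' : ∀ x ∈ l', 1 ≤ x) (hd'len : d'.length = l'.length)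
    (hhead : d' = [] ∨ ∃ d'', d' = false :: d'') :
    List.replicate (a-1) b ++ decode (!b) (subB l' d') ≠
      List.replicate a b ++ decode (!b) (subB l' e') := by
  intro H
  have hok : subB l' d' = [] ∨ ∃ k rest, subB l' d' = (k+1) :: rest := by
    rcases hhead with rfl | ⟨d'', rfl⟩
    · left; simp [subB]
    · cases l' with
      | nil => left; simp [subB]
      | cons a₂ l'' =>
        right
        have ha₂ : 1 ≤ a₂ := hl' a₂ (by simp)
        refine ⟨a₂ - 1, subB l'' d'', ?_⟩
        rw [subB, List.zipWith_cons_cons]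
        simp only [if_neg (by simp : ¬(false = true))]
        congr 1
        omega
  have hlen := congrArg (fun t => (t.takeWhile (· == b)).length) H
  simp only [takeWhile_replicate_append, List.length_append, List.length_replicate,
    takeWhile_decode_not b _ hok] at hlen
  simp at hlen
  omega

lemma decode_subB_inj : ∀ (l : List ℕ) (b : Bool) (d e : List Bool),
    (∀ a ∈ l, 1 ≤ a) → d.length = l.length → e.length = l.length →
    List.Chain' (fun p q => ¬(p = true ∧ q = true)) d →
    List.Chain' (fun p q => ¬(p = true ∧ q = true)) e →
    decode b (subB l d) = decode b (subB l e) → d = e := by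
  intro l
  induction l with
  | nil =>
    intro b d e _ hd he _ _ _
    rw [List.length_eq_zero_iff.1 hd, List.length_eq_zero_iff.1 he]
  | cons a l' ih =>
    intro b d e hl hd he hcd hce H
    cases d with | nil => simp at hd | cons p d' =>
    cases e with | nil => simp at he | cons q e' =>
    have ha : 1 ≤ a := hl a (by simp)
    have hl' : ∀ x ∈ l', 1 ≤ x := fun x hx => hl x (by simp [hx])
    have hd' : d'.length = l'.length := by simpa using hd
    have he' : e'.length = l'.length := by simpa using he
    rw [subB, List.zipWith_cons_cons, subB, List.zipWith_cons_cons] at H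
    rw [decode, decode] at H
    have headOK : ∀ (f' : List Bool), List.Chain' (fun p q => ¬(p = true ∧ q = true)) (true :: f') →
        f' = [] ∨ ∃ f'', f' = false :: f'' := by
      intro f' hc
      cases f' with
      | nil => exact Or.inl rfl
      | cons h t =>
        right
        unfold List.Chain' at hc; rw [List.isChain_cons_cons] at hc
        refine ⟨t, ?_⟩
        have : h = false := by
          cases h
          · rfl
          · exact absurd ⟨rfl, rfl⟩ hc.1
        rw [this]
    cases p <;> cases q
    · -- both false
      simp only [if_neg (by simp : ¬(false = true))] at H
      have := List.append_cancel_left H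
      have := ih (!b) d' e' hl' hd' he' hcd.tail hce.tail this
      rw [this]
    · -- p = false, q = true : contradiction
      simp only [if_neg (by simp : ¬(false = true)), if_pos rfl] at H
      exact absurd H.symm (lead_contra b a ha l' e' d' hl' he' (headOK e' hce))
    · -- p = true, q = false
      simp only [if_neg (by simp : ¬(false = true)), if_pos rfl] at H
      exact absurd H (lead_contra b a ha l' d' e' hl' hd' (headOK d' hcd))
    · -- both true
      simp only [if_pos rfl] at H
      have := List.append_cancel_left H
      have := ih (!b) d' e' hl' hd' he' hcd.tail hce.tail this
      rw [this]

lemma zipSub_sum : ∀ {c l : List ℕ}, List.Forall₂ (· ≤ ·) c l →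
    (List.zipWith (· - ·) l c).sum + c.sum = l.sum := by
  intro c l h
  induction h with
  | nil => rfl
  | cons hab _ ih => simp only [List.zipWith_cons_cons, List.sum_cons]; omega

lemma zipSub_zipSub : ∀ {c l : List ℕ}, List.Forall₂ (· ≤ ·) c l →
    List.zipWith (· - ·) l (List.zipWith (· - ·) l c) = c := by
  intro c l h
  induction h with
  | nil => rfl
  | cons hab _ ih =>
    simp only [List.zipWith_cons_cons, ih, List.cons.injEq, and_true]
    omega

lemma list_length_le_sum : ∀ (l : List ℕ), (∀ a ∈ l, 1 ≤ a) → l.length ≤ l.sum := by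
  intro l hl
  induction l with
  | nil => simp
  | cons a t ih =>
    simp only [List.length_cons, List.sum_cons]
    have := hl a (by simp)
    have := ih (fun x hx => hl x (by simp [hx]))
    omega

theorem deletion_sphere_size_bounds (L ε : ℕ) (hL : 1 ≤ L)
    (x : List Bool) (hx : x.length = L) :
    (runs x - ε + 1).choose ε
        ≤ {y : List Bool | y.length = L - ε ∧ y.Sublist x}.ncard ∧
      {y : List Bool | y.length = L - ε ∧ y.Sublist x}.ncard
        ≤ (runs x + ε - 1).choose ε := by
  obtain ⟨b, l, hl, hdec⟩ := exists_encoding x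
  set S : Set (List Bool) := {y : List Bool | y.length = L - ε ∧ y.Sublist x} with hS
  have hr : l.length = runs x := by rw [← hdec, runs_decode l b hl]
  have hsum : l.sum = L := by rw [← hx, ← hdec, decode_length]
  have hrL : runs x ≤ L := by
    rw [← hr, ← hsum]; exact list_length_le_sum l hl
  have hr1 : 1 ≤ runs x := by
    rw [← hr]
    rcases l with _ | ⟨a, t⟩
    · exfalso; rw [← hsum] at hL; simp at hL
    · simp
  have hSfin : S.Finite := by
    apply Set.Finite.subset (x.sublists.toFinset.finite_toSet)
    intro y hy
    simp only [Finset.mem_coe, List.mem_toFinset, List.mem_sublists]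
    exact hy.2
  constructor
  · -- lower bound
    by_cases hεr : ε ≤ runs x
    · have hmaps : ∀ d ∈ (noAdj false (runs x) ε : Finset (List Bool)),
          decode b (subB l d) ∈ S := by
        intro d hd
        obtain ⟨hlen, hcount, hchain, -⟩ := noAdj_sound _ _ _ d hd
        have hdl : d.length = l.length := by rw [hlen, hr]
        constructor
        · rw [decode_length]
          have := subB_sum l d hl hdl
          rw [hcount, hsum] at this
          omega
        · rw [← hdec]
          exact decode_sublist b (subB_forall₂ l d hdl)
      have hinj : Set.InjOn (fun d => decode b (subB l d))
          ((noAdj false (runs x) ε : Finset (List Bool)) : Set (List Bool)) := by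
        intro d hd e he hde
        obtain ⟨hlen1, -, hchain1, -⟩ := noAdj_sound _ _ _ d (by simpa using hd)
        obtain ⟨hlen2, -, hchain2, -⟩ := noAdj_sound _ _ _ e (by simpa using he)
        exact decode_subB_inj l b d e hl (by rw [hlen1, hr]) (by rw [hlen2, hr])
          hchain1 hchain2 hde
      calc (runs x - ε + 1).choose ε
          ≤ (noAdj false (runs x) ε).card := (noAdj_card (runs x)).2 ε hεr
        _ = ((noAdj false (runs x) ε : Finset (List Bool)) : Set (List Bool)).ncard :=
            (Set.ncard_coe_finset _).symm
        _ = ((fun d => decode b (subB l d)) ''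
              ((noAdj false (runs x) ε : Finset (List Bool)) : Set (List Bool))).ncard :=
            (Set.ncard_image_of_injOn hinj).symm
        _ ≤ S.ncard := by
            apply Set.ncard_le_ncard _ hSfin
            rintro y ⟨d, hd, rfl⟩
            exact hmaps d (by simpa using hd)
    · have h2 : 2 ≤ ε := by omega
      have : runs x - ε + 1 = 1 := by omega
      rw [this, Nat.choose_eq_zero_of_lt (by omega)]
      exact Nat.zero_le _
  · -- upper bound
    obtain ⟨r', hr'⟩ : ∃ r', runs x = r' + 1 := ⟨runs x - 1, by omega⟩
    by_cases hεL : ε ≤ L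
    · classical
      set φ : List Bool → List ℕ := fun y =>
        if h : ∃ c, List.Forall₂ (· ≤ ·) c l ∧ decode b c = y then
          List.zipWith (· - ·) l h.choose else [] with hφ
      have hspec : ∀ y ∈ S, ∃ h : ∃ c, List.Forall₂ (· ≤ ·) c l ∧ decode b c = y,
          φ y = List.zipWith (· - ·) l h.choose := by
        intro y hy
        have h : ∃ c, List.Forall₂ (· ≤ ·) c l ∧ decode b c = y := by
          apply sublist_decode
          rw [hdec]
          exact hy.2
        exact ⟨h, by rw [hφ]; simp [h]⟩
      have hmaps : ∀ y ∈ S, φ y ∈ ((comp (runs x) ε : Finset (List ℕ)) : Set (List ℕ)) := by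
        intro y hy
        obtain ⟨h, hφy⟩ := hspec y hy
        obtain ⟨hfa, hdecy⟩ := h.choose_spec
        have hclen : h.choose.length = l.length := List.Forall₂.length_eq hfa
        have hcsum : h.choose.sum = L - ε := by
          rw [← decode_length h.choose b, hdecy]; exact hy.1
        simp only [Finset.coe_insert, Finset.mem_coe]
        apply comp_complete ε (runs x)
        · rw [hφy, List.length_zipWith, hclen, hr]; omega
        · rw [hφy]
          have := zipSub_sum hfa
          rw [hcsum, hsum] at this
          omega
      have hinj : Set.InjOn φ S := by
        intro y1 hy1 y2 hy2 he
        obtain ⟨h1, hφ1⟩ := hspec y1 hy1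
        obtain ⟨h2, hφ2⟩ := hspec y2 hy2
        obtain ⟨hfa1, hdec1⟩ := h1.choose_spec
        obtain ⟨hfa2, hdec2⟩ := h2.choose_spec
        have : h1.choose = h2.choose := by
          have e1 := zipSub_zipSub hfa1
          have e2 := zipSub_zipSub hfa2
          rw [← e1, ← e2, ← hφ1, ← hφ2, he]
        rw [← hdec1, ← hdec2, this]
      calc S.ncard ≤ ((comp (runs x) ε : Finset (List ℕ)) : Set (List ℕ)).ncard :=
            Set.ncard_le_ncard_of_injOn φ hmaps hinj ((comp (runs x) ε).finite_toSet)
        _ = (comp (runs x) ε).card := Set.ncard_coe_finset _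
        _ ≤ (runs x + ε - 1).choose ε := by
            rw [hr']
            have := comp_card ε r'
            have heq : r' + 1 + ε - 1 = r' + ε := by omega
            rw [heq]
            exact this
    · have hSeq : S = {([] : List Bool)} := by
        ext y
        simp only [hS, Set.mem_setOf_eq, Set.mem_singleton_iff]
        constructor
        · rintro ⟨h1, -⟩
          have : L - ε = 0 := by omega
          rw [this] at h1
          exact List.length_eq_zero_iff.1 h1
        · rintro rfl
          exact ⟨by simp; omega, List.nil_sublist x⟩
      rw [hSeq, Set.ncard_singleton]
      exact Nat.succ_le_of_lt (Nat.choose_pos (by omega))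
end
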